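/- Let x ∈ ℝⁿ with f(x) ≠ 0 and suppose the flow S_t x is defined and f(S_t x) ≠ 0 for all t ≥ 0. Let M be a C¹ function on a neighborhood of the forward orbit of x with values in the symmetric n×n matrices, and let φ₁, φ₂ be solutions of the variational equation φ̇(t) = Df(S_t x)φ(t). Then for all t ≥ 0: d/dt [φ₁(t)^T P_{S_t x}^T M(S_t x) P_{S_t x} φ₂(t)] = φ₁(t)^T P_{S_t x}^T (LM(S_t x)) P_{S_t x} φ₂(t). -/

import Mathlib

open Matrix Set Filter MeasureTheory

/-- Euclidean norm of a vector in `ℝⁿ`. -/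
noncomputable def enorm {n : ℕ} (v : Fin n → ℝ) : ℝ := Real.sqrt (∑ i, v i ^ 2)

/-- Operator norm of a matrix induced by the Euclidean norm. -/
noncomputable def opn {n : ℕ} (A : Matrix (Fin n) (Fin n) ℝ) : ℝ :=
  ‖Matrix.toEuclideanCLM (𝕜 := ℝ) A‖

/-- The projection `P_x = I - f(x)f(x)ᵀ/‖f(x)‖²` onto the hyperplane perpendicular to `f(x)`. -/
noncomputable def Pm {n : ℕ} (f : (Fin n → ℝ) → Fin n → ℝ) (x : Fin n → ℝ) :
    Matrix (Fin n) (Fin n) ℝ :=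
  1 - (_root_.enorm (f x) ^ 2)⁻¹ • Matrix.vecMulVec (f x) (f x)

/-- The differential operator
`LM(x) = M′(x) + Df(x)ᵀM(x) + M(x)Df(x) - M(x)f(x)f(x)ᵀ(Df(x)+Df(x)ᵀ)/‖f(x)‖²
  - (Df(x)+Df(x)ᵀ)f(x)f(x)ᵀM(x)/‖f(x)‖²`,
where the orbital derivative `M′(x)` has entries `∇M_ij(x) ⋅ f(x)`. -/
noncomputable def LMop {n : ℕ} (f : (Fin n → ℝ) → Fin n → ℝ)
    (Df M : (Fin n → ℝ) → Matrix (Fin n) (Fin n) ℝ) (x : Fin n → ℝ) :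
    Matrix (Fin n) (Fin n) ℝ :=
  (Matrix.of fun i j => fderiv ℝ (fun y => M y i j) x (f x))
    + (Df x)ᵀ * M x + M x * Df x
    - (_root_.enorm (f x) ^ 2)⁻¹ • (M x * Matrix.vecMulVec (f x) (f x) * (Df x + (Df x)ᵀ))
    - (_root_.enorm (f x) ^ 2)⁻¹ • ((Df x + (Df x)ᵀ) * Matrix.vecMulVec (f x) (f x) * M x)

lemma enorm_sq {n : ℕ} (v : Fin n → ℝ) : _root_.enorm v ^ 2 = ∑ i, v i ^ 2 :=
  Real.sq_sqrt (Finset.sum_nonneg fun i _ => sq_nonneg _)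

lemma vecMulVec_mulVec {n : ℕ} (a b v : Fin n → ℝ) :
    (Matrix.vecMulVec a b).mulVec v = (b ⬝ᵥ v) • a := by
  funext i
  simp [Matrix.mulVec, Matrix.vecMulVec_apply, dotProduct, Finset.sum_mul]
  exact Finset.sum_congr rfl fun j _ => by ring

lemma vecMulVec_symm {n : ℕ} (a : Fin n → ℝ) :
    (Matrix.vecMulVec a a)ᵀ = Matrix.vecMulVec a a := by
  funext i j; simp [Matrix.vecMulVec_apply, Matrix.transpose_apply, mul_comm]

lemma Pm_symm {n : ℕ} (f : (Fin n → ℝ) → Fin n → ℝ) (y : Fin n → ℝ) :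
    (Pm f y)ᵀ = Pm f y := by
  simp [Pm, Matrix.transpose_sub, Matrix.transpose_smul, vecMulVec_symm]

lemma Pm_mulVec {n : ℕ} (f : (Fin n → ℝ) → Fin n → ℝ) (y : Fin n → ℝ) (v : Fin n → ℝ) :
    (Pm f y).mulVec v = v - ((_root_.enorm (f y) ^ 2)⁻¹ * (f y ⬝ᵥ v)) • f y := by
  rw [Pm, Matrix.sub_mulVec, Matrix.one_mulVec, Matrix.smul_mulVec,
    vecMulVec_mulVec, smul_smul]

lemma dot_sandwich {n : ℕ} (P N : Matrix (Fin n) (Fin n) ℝ) (v w : Fin n → ℝ) :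
    v ⬝ᵥ (Pᵀ * N * P).mulVec w = (P.mulVec v) ⬝ᵥ (N.mulVec (P.mulVec w)) := by
  rw [← Matrix.mulVec_mulVec, ← Matrix.mulVec_mulVec, Matrix.dotProduct_mulVec,
    Matrix.vecMul_transpose]

lemma mulVec_dot {n : ℕ} (A : Matrix (Fin n) (Fin n) ℝ) (v w : Fin n → ℝ) :
    (A.mulVec v) ⬝ᵥ w = v ⬝ᵥ (Aᵀ.mulVec w) := by
  rw [Matrix.dotProduct_mulVec, Matrix.vecMul_transpose]

lemma dot_sum_sum {n : ℕ} (a b : Fin n → ℝ) (N : Matrix (Fin n) (Fin n) ℝ) :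
    a ⬝ᵥ N.mulVec b = ∑ i, ∑ j, a i * (N i j * b j) := by
  simp [dotProduct, Matrix.mulVec, Finset.mul_sum]

lemma psi_hasDeriv {n : ℕ} (f : (Fin n → ℝ) → Fin n → ℝ) (g : ℝ → Fin n → ℝ)
    (A : Matrix (Fin n) (Fin n) ℝ) (t : ℝ)
    (hu : HasDerivWithinAt (fun τ => f (g τ)) (A.mulVec (f (g t))) (Set.Ici 0) t)
    (hne : f (g t) ≠ 0)
    (φ : ℝ → Fin n → ℝ)
    (hφ : HasDerivWithinAt φ (A.mulVec (φ t)) (Set.Ici 0) t) :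
    HasDerivWithinAt (fun τ => (Pm f (g τ)).mulVec (φ τ))
      ((A - (_root_.enorm (f (g t)) ^ 2)⁻¹ •
          (Matrix.vecMulVec (f (g t)) (f (g t)) * (A + Aᵀ))).mulVec
        ((Pm f (g t)).mulVec (φ t))) (Set.Ici 0) t := by
  have hui : ∀ i, HasDerivWithinAt (fun τ => f (g τ) i) (A.mulVec (f (g t)) i) (Set.Ici 0) t :=
    hasDerivWithinAt_pi.1 hu
  have hφi : ∀ i, HasDerivWithinAt (fun τ => φ τ i) (A.mulVec (φ t) i) (Set.Ici 0) t :=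
    hasDerivWithinAt_pi.1 hφ
  obtain ⟨i0, hi0⟩ := Function.ne_iff.mp hne
  have hi0' : f (g t) i0 ≠ 0 := by simpa using hi0
  have hcpos : 0 < ∑ i, f (g t) i ^ 2 :=
    Finset.sum_pos' (fun i _ => sq_nonneg _) ⟨i0, Finset.mem_univ _, by positivity⟩
  have hc0 : (∑ i, f (g t) i ^ 2) ≠ 0 := ne_of_gt hcpos
  -- derivative of c τ = ∑ f(g τ)_i ^ 2
  have hcd : HasDerivWithinAt (fun τ => ∑ i, f (g τ) i ^ 2)
      (2 * (f (g t) ⬝ᵥ A.mulVec (f (g t)))) (Set.Ici 0) t := by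
    have h := HasDerivWithinAt.fun_sum (fun i (_ : i ∈ Finset.univ) => (hui i).fun_pow 2)
    refine h.congr_deriv ?_
    symm
    simp only [dotProduct]
    rw [Finset.mul_sum]
    exact Finset.sum_congr rfl fun j _ => by ring
  have hinv : HasDerivWithinAt (fun τ => (∑ i, f (g τ) i ^ 2)⁻¹)
      (-(2 * (f (g t) ⬝ᵥ A.mulVec (f (g t)))) / (∑ i, f (g t) i ^ 2) ^ 2)
      (Set.Ici 0) t := hcd.inv hc0
  have hdot : HasDerivWithinAt (fun τ => f (g τ) ⬝ᵥ φ τ)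
      (A.mulVec (f (g t)) ⬝ᵥ φ t + f (g t) ⬝ᵥ A.mulVec (φ t)) (Set.Ici 0) t := by
    have h := HasDerivWithinAt.fun_sum (fun i (_ : i ∈ Finset.univ) => (hui i).fun_mul (hφi i))
    refine h.congr_deriv ?_
    symm
    simp only [dotProduct, ← Finset.sum_add_distrib]
  have hs : HasDerivWithinAt (fun τ => (∑ i, f (g τ) i ^ 2)⁻¹ * (f (g τ) ⬝ᵥ φ τ))
      (-(2 * (f (g t) ⬝ᵥ A.mulVec (f (g t)))) / (∑ i, f (g t) i ^ 2) ^ 2 * (f (g t) ⬝ᵥ φ t)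
        + (∑ i, f (g t) i ^ 2)⁻¹ * (A.mulVec (f (g t)) ⬝ᵥ φ t + f (g t) ⬝ᵥ A.mulVec (φ t)))
      (Set.Ici 0) t := hinv.mul hdot
  have hcomp : ∀ i, HasDerivWithinAt
      (fun τ => φ τ i - ((∑ j, f (g τ) j ^ 2)⁻¹ * (f (g τ) ⬝ᵥ φ τ)) * f (g τ) i)
      (A.mulVec (φ t) i -
        ((-(2 * (f (g t) ⬝ᵥ A.mulVec (f (g t)))) / (∑ i, f (g t) i ^ 2) ^ 2 * (f (g t) ⬝ᵥ φ t)
          + (∑ i, f (g t) i ^ 2)⁻¹ * (A.mulVec (f (g t)) ⬝ᵥ φ t + f (g t) ⬝ᵥ A.mulVec (φ t)))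
            * f (g t) i
          + ((∑ i, f (g t) i ^ 2)⁻¹ * (f (g t) ⬝ᵥ φ t)) * A.mulVec (f (g t)) i))
      (Set.Ici 0) t := fun i => (hφi i).sub (hs.mul (hui i))
  have hfun : (fun τ => (Pm f (g τ)).mulVec (φ τ)) =
      fun τ => (fun i => φ τ i - ((∑ j, f (g τ) j ^ 2)⁻¹ * (f (g τ) ⬝ᵥ φ τ)) * f (g τ) i) := by
    funext τ
    rw [Pm_mulVec, enorm_sq]
    funext i
    simp [Pi.sub_apply, Pi.smul_apply, smul_eq_mul]
  rw [hfun]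
  have hval : ((A - (_root_.enorm (f (g t)) ^ 2)⁻¹ •
          (Matrix.vecMulVec (f (g t)) (f (g t)) * (A + Aᵀ))).mulVec
        ((Pm f (g t)).mulVec (φ t))) =
      fun i => A.mulVec (φ t) i -
        ((-(2 * (f (g t) ⬝ᵥ A.mulVec (f (g t)))) / (∑ i, f (g t) i ^ 2) ^ 2 * (f (g t) ⬝ᵥ φ t)
          + (∑ i, f (g t) i ^ 2)⁻¹ * (A.mulVec (f (g t)) ⬝ᵥ φ t + f (g t) ⬝ᵥ A.mulVec (φ t)))
            * f (g t) i
          + ((∑ i, f (g t) i ^ 2)⁻¹ * (f (g t) ⬝ᵥ φ t)) * A.mulVec (f (g t)) i) := by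
    rw [Pm_mulVec, enorm_sq]
    simp only [Matrix.sub_mulVec, Matrix.smul_mulVec, ← Matrix.mulVec_mulVec,
      _root_.vecMulVec_mulVec, Matrix.add_mulVec, Matrix.mulVec_sub, Matrix.mulVec_smul,
      dotProduct_add, dotProduct_sub, dotProduct_smul, smul_eq_mul,
      ← mulVec_dot]
    rw [dotProduct_comm (A *ᵥ f (g t)) (f (g t))]
    funext i
    simp only [Pi.sub_apply, Pi.smul_apply, smul_eq_mul]
    field_simp
    ring
  rw [hval]
  exact hasDerivWithinAt_pi.2 hcomp


/-- Lemma 4.1, equation (4.1): for solutions `φ₁, φ₂` of the variational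
equation along the forward orbit of `x`,
`d/dt [φ₁(t)ᵀ P_{S_t x}ᵀ M(S_t x) P_{S_t x} φ₂(t)] = φ₁(t)ᵀ P_{S_t x}ᵀ (LM(S_t x)) P_{S_t x} φ₂(t)`. -/
theorem stmt8 {n : ℕ} (f : (Fin n → ℝ) → Fin n → ℝ)
    (Df : (Fin n → ℝ) → Matrix (Fin n) (Fin n) ℝ)
    (hf : ContDiff ℝ 1 f)
    (hDf : ∀ y, HasFDerivAt f (LinearMap.toContinuousLinearMap ((Df y).mulVecLin)) y)
    (x : Fin n → ℝ) (hfx : f x ≠ 0)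
    -- `g t = S_t x` is the forward trajectory through `x`
    (g : ℝ → Fin n → ℝ) (hg0 : g 0 = x)
    (hg : ∀ t ≥ (0:ℝ), HasDerivWithinAt g (f (g t)) (Set.Ici 0) t)
    (hfg : ∀ t ≥ (0:ℝ), f (g t) ≠ 0)
    -- `M` is C¹ and symmetric-matrix-valued on an open neighborhood of the forward orbit
    (V : Set (Fin n → ℝ)) (hV : IsOpen V) (hgV : ∀ t ≥ (0:ℝ), g t ∈ V)
    (M : (Fin n → ℝ) → Matrix (Fin n) (Fin n) ℝ)
    (hM : ∀ i j, ContDiffOn ℝ 1 (fun y => M y i j) V)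
    (hMsym : ∀ y ∈ V, (M y)ᵀ = M y)
    -- `φ₁, φ₂` are solutions of the variational equation
    (φ₁ φ₂ : ℝ → Fin n → ℝ)
    (hφ₁ : ∀ t ≥ (0:ℝ), HasDerivWithinAt φ₁ ((Df (g t)).mulVec (φ₁ t)) (Set.Ici 0) t)
    (hφ₂ : ∀ t ≥ (0:ℝ), HasDerivWithinAt φ₂ ((Df (g t)).mulVec (φ₂ t)) (Set.Ici 0) t) :
    ∀ t ≥ (0:ℝ),
      HasDerivWithinAt
        (fun τ => φ₁ τ ⬝ᵥ ((Pm f (g τ))ᵀ * M (g τ) * Pm f (g τ)).mulVec (φ₂ τ))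
        (φ₁ t ⬝ᵥ ((Pm f (g t))ᵀ * LMop f Df M (g t) * Pm f (g t)).mulVec (φ₂ t))
        (Set.Ici 0) t := by
  intro t ht
  have hu : HasDerivWithinAt (fun τ => f (g τ)) ((Df (g t)).mulVec (f (g t)))
      (Set.Ici 0) t := by
    have h := (hDf (g t)).comp_hasDerivWithinAt t (hg t ht)
    exact h
  have hψ₁ := psi_hasDeriv f g (Df (g t)) t hu (hfg t ht) φ₁ (hφ₁ t ht)
  have hψ₂ := psi_hasDeriv f g (Df (g t)) t hu (hfg t ht) φ₂ (hφ₂ t ht)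
  set A : Matrix (Fin n) (Fin n) ℝ := Df (g t) with hA
  set B : Matrix (Fin n) (Fin n) ℝ :=
    A - (_root_.enorm (f (g t)) ^ 2)⁻¹ •
      (Matrix.vecMulVec (f (g t)) (f (g t)) * (A + Aᵀ)) with hBdef
  set ψ₁t : Fin n → ℝ := (Pm f (g t)).mulVec (φ₁ t) with hψ₁t
  set ψ₂t : Fin n → ℝ := (Pm f (g t)).mulVec (φ₂ t) with hψ₂t
  have hψ₁i := hasDerivWithinAt_pi.1 hψ₁
  have hψ₂i := hasDerivWithinAt_pi.1 hψ₂
  have hMij : ∀ i j, HasDerivWithinAt (fun τ => M (g τ) i j)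
      (fderiv ℝ (fun y => M y i j) (g t) (f (g t))) (Set.Ici 0) t := by
    intro i j
    have hdiff : DifferentiableAt ℝ (fun y => M y i j) (g t) :=
      ((hM i j).differentiableOn one_ne_zero).differentiableAt (hV.mem_nhds (hgV t ht))
    have h := hdiff.hasFDerivAt.comp_hasDerivWithinAt t (hg t ht)
    exact h
  have hsum : HasDerivWithinAt
      (fun τ => ∑ i, ∑ j, ((Pm f (g τ)).mulVec (φ₁ τ)) i *
        (M (g τ) i j * ((Pm f (g τ)).mulVec (φ₂ τ)) j))
      (∑ i, ∑ j, ((B.mulVec ψ₁t) i * (M (g t) i j * ψ₂t j) +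
        ψ₁t i * (fderiv ℝ (fun y => M y i j) (g t) (f (g t)) * ψ₂t j +
          M (g t) i j * (B.mulVec ψ₂t) j)))
      (Set.Ici 0) t :=
    HasDerivWithinAt.fun_sum fun i _ => HasDerivWithinAt.fun_sum fun j _ =>
      (hψ₁i i).mul ((hMij i j).mul (hψ₂i j))
  have hF : (fun τ => φ₁ τ ⬝ᵥ ((Pm f (g τ))ᵀ * M (g τ) * Pm f (g τ)).mulVec (φ₂ τ)) =
      (fun τ => ∑ i, ∑ j, ((Pm f (g τ)).mulVec (φ₁ τ)) i *
        (M (g τ) i j * ((Pm f (g τ)).mulVec (φ₂ τ)) j)) := by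
    funext τ
    rw [dot_sandwich, dot_sum_sum]
  have hBt : Bᵀ = Aᵀ - (_root_.enorm (f (g t)) ^ 2)⁻¹ •
      ((A + Aᵀ) * Matrix.vecMulVec (f (g t)) (f (g t))) := by
    rw [hBdef, Matrix.transpose_sub, Matrix.transpose_smul, Matrix.transpose_mul,
      Matrix.transpose_add, Matrix.transpose_transpose, vecMulVec_symm,
      add_comm Aᵀ A]
  have hL : LMop f Df M (g t) =
      (Matrix.of fun i j => fderiv ℝ (fun y => M y i j) (g t) (f (g t)))
        + Bᵀ * M (g t) + M (g t) * B := by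
    rw [hBt, hBdef, LMop]
    simp only [Matrix.sub_mul, Matrix.mul_sub, smul_mul_assoc, mul_smul_comm,
      Matrix.mul_assoc]
    abel
  have hVal : φ₁ t ⬝ᵥ ((Pm f (g t))ᵀ * LMop f Df M (g t) * Pm f (g t)).mulVec (φ₂ t) =
      ∑ i, ∑ j, ((B.mulVec ψ₁t) i * (M (g t) i j * ψ₂t j) +
        ψ₁t i * (fderiv ℝ (fun y => M y i j) (g t) (f (g t)) * ψ₂t j +
          M (g t) i j * (B.mulVec ψ₂t) j)) := by
    rw [dot_sandwich, hL]
    simp only [Matrix.add_mulVec, dotProduct_add, ← Matrix.mulVec_mulVec]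
    rw [show ψ₁t ⬝ᵥ Bᵀ.mulVec ((M (g t)).mulVec ψ₂t) =
      (B.mulVec ψ₁t) ⬝ᵥ ((M (g t)).mulVec ψ₂t) from (mulVec_dot B ψ₁t _).symm]
    rw [dot_sum_sum, dot_sum_sum, dot_sum_sum]
    simp only [← Finset.sum_add_distrib]
    exact Finset.sum_congr rfl fun i _ => Finset.sum_congr rfl fun j _ => by
      simp only [Matrix.of_apply]; ring
  rw [hF, hVal]
  exact hsum
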